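/- Let Q₀(z) = z^{n₁} + b₂z^{n₂} + ⋯ + b_r z^{n_r} + b_{r+1} be a polynomial with n₁ > n₂ > ⋯ > n_r > 0, b_i ≠ 0 for i = 2, …, r+1, and gcd(n₁, n₂, …, n_r) = 1. Let β₂ ≥ 1 be an integer and μ ∈ ℂ. If Q₀(μ^{β₂} z^{β₂}) = Q₀(z^{β₂}) for all z ∈ ℂ, then μ^{β₂} = 1. -/

import Mathlib

open Polynomial OnePoint

noncomputable section

/-- The Riemann sphere, modelled as the one-point compactification of `ℂ`. -/
abbrev RSphere : Type := OnePoint ℂ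

/-- The finite part of a point of the Riemann sphere (junk value `0` at `∞`). -/
def toFin : RSphere → ℂ := fun x => match x with
  | (∞ : RSphere) => 0
  | (z : ℂ) => z

/-- The chordal distance on the Riemann sphere. -/
def chordalDist : RSphere → RSphere → ℝ := fun x y =>
  match x, y with
  | (∞ : RSphere), (∞ : RSphere) => 0
  | (∞ : RSphere), (w : ℂ) => 2 / Real.sqrt (1 + ‖w‖ ^ 2)
  | (z : ℂ), (∞ : RSphere) => 2 / Real.sqrt (1 + ‖z‖ ^ 2)
  | (z : ℂ), (w : ℂ) =>
      2 * ‖z - w‖ /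
        (Real.sqrt (1 + ‖z‖ ^ 2) * Real.sqrt (1 + ‖w‖ ^ 2))

/-- The Fatou set of a self-map of the Riemann sphere: the set of points at which the
family of iterates is equicontinuous with respect to the chordal metric.  It is the largest
open set on which the iterates are equicontinuous. -/
def FatouSet (R : RSphere → RSphere) : Set RSphere :=
  {x | ∀ ε : ℝ, 0 < ε → ∃ V ∈ nhds x, ∀ y ∈ V, ∀ n : ℕ, chordalDist (R^[n] x) (R^[n] y) < ε}

/-- The Julia set: the complement of the Fatou set. -/
def JuliaSet (R : RSphere → RSphere) : Set RSphere :=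
  (FatouSet R)ᶜ

/-- A polynomial regarded as a self-map of the Riemann sphere fixing `∞`. -/
def polySphere (p : Polynomial ℂ) : RSphere → RSphere := fun x =>
  match x with
  | (∞ : RSphere) => ∞
  | (z : ℂ) => ((p.eval z : ℂ) : RSphere)

/-- The affine map `z ↦ a z + b` extended to the Riemann sphere by `∞ ↦ ∞`. -/
def affineSphere (a b : ℂ) : RSphere → RSphere := fun x =>
  match x with
  | (∞ : RSphere) => ∞
  | (z : ℂ) => ((a * z + b : ℂ) : RSphere)

/-- The rational map `P/Q` as a self-map of the Riemann sphere (intended for a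
representation `P/Q` in lowest terms). -/
def ratSphere (P Q : Polynomial ℂ) : RSphere → RSphere := fun x =>
  match x with
  | (∞ : RSphere) =>
      if P.natDegree > Q.natDegree then ∞
      else ((P.leadingCoeff / Q.leadingCoeff : ℂ) : RSphere)
  | (z : ℂ) =>
      if Q.eval z = 0 then ∞ else ((P.eval z / Q.eval z : ℂ) : RSphere)

/-- The Möbius transformation `z ↦ (az+b)/(cz+d)` as a self-map of the Riemann sphere
(intended for `ad - bc ≠ 0`). -/
def mobiusSphere (a b c d : ℂ) : RSphere → RSphere := fun x =>
  match x with
  | (∞ : RSphere) => if c = 0 then ∞ else ((a / c : ℂ) : RSphere)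
  | (z : ℂ) => if c * z + d = 0 then ∞ else (((a * z + b) / (c * z + d) : ℂ) : RSphere)

/-- The inversion `z ↦ 1/z` on the Riemann sphere. -/
def invSphere : RSphere → RSphere := fun x =>
  match x with
  | (∞ : RSphere) => ((0 : ℂ) : RSphere)
  | (z : ℂ) => if z = 0 then ∞ else ((z⁻¹ : ℂ) : RSphere)

/-- `Σ R`: the group of rotations `z ↦ az + b` (`|a| = 1`, `a ≠ 1`, extended by `∞ ↦ ∞`)
preserving the Julia set of `R`, together with the identity. -/
def SigmaGroup (R : RSphere → RSphere) : Set (RSphere → RSphere) :=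
  {σ | σ = id ∨ ∃ a b : ℂ, ‖a‖ = 1 ∧ a ≠ 1 ∧ σ = affineSphere a b ∧
        affineSphere a b '' JuliaSet R = JuliaSet R}

/-- `U` is a Fatou component of `R`: a connected component of the Fatou set. -/
def IsFatouComponent (R : RSphere → RSphere) (U : Set RSphere) : Prop :=
  U.Nonempty ∧ IsOpen U ∧ IsPreconnected U ∧ U ⊆ FatouSet R ∧
    ∀ V : Set RSphere, IsPreconnected V → V ⊆ FatouSet R → U ⊆ V → V = U

/-- The multiplier of `R^[k]` at a fixed point `x` of `R^[k]` equals `lam`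
(using the chart `w ↦ 1/w` at `∞`). -/
def MultiplierEq (R : RSphere → RSphere) (k : ℕ) (x : RSphere) (lam : ℂ) : Prop :=
  (∃ z₀ : ℂ, x = (z₀ : RSphere) ∧ HasDerivAt (fun z : ℂ => toFin (R^[k] (z : RSphere))) lam z₀) ∨
  (x = (∞ : RSphere) ∧
    HasDerivAt (fun w : ℂ => toFin (invSphere (R^[k] (invSphere (w : RSphere))))) lam 0)

/-- `R` has a parabolic domain: a `k`-periodic Fatou component whose boundary contains a
`k`-periodic point whose multiplier is a root of unity. -/
def HasParabolicDomain (R : RSphere → RSphere) : Prop :=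
  ∃ (U : Set RSphere) (k : ℕ), 0 < k ∧ IsFatouComponent R U ∧ R^[k] '' U ⊆ U ∧
    ∃ x ∈ frontier U, R^[k] x = x ∧
      ∃ lam : ℂ, (∃ m : ℕ, 0 < m ∧ lam ^ m = 1) ∧ MultiplierEq R k x lam

/-- `R` has a rotation domain (Siegel disc or Herman ring): a `k`-periodic Fatou component
on which `R^[k]` is a bijection. -/
def HasRotationDomain (R : RSphere → RSphere) : Prop :=
  ∃ (U : Set RSphere) (k : ℕ), 0 < k ∧ IsFatouComponent R U ∧ Set.BijOn (R^[k]) U U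

/-- A rational map is exceptional if its Julia set is the whole sphere, a circle in the
sphere, or a closed arc of such a circle (circles in the sphere being Möbius images of
the unit circle). -/
def ExceptionalMap (R : RSphere → RSphere) : Prop :=
  JuliaSet R = Set.univ ∨
    ∃ a b c d : ℂ, a * d - b * c ≠ 0 ∧ ∃ θ₁ θ₂ : ℝ,
      JuliaSet R =
        mobiusSphere a b c d ''
          ((fun θ : ℝ => ((Complex.exp (θ * Complex.I) : ℂ) : RSphere)) '' Set.Icc θ₁ θ₂)

/-- `L_p(z) = p(z)p''(z)/p'(z)²`. -/
def Lfun (p : Polynomial ℂ) (z : ℂ) : ℂ :=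
  p.eval z * (derivative (derivative p)).eval z / (p.derivative.eval z) ^ 2

/-- The Chebyshev method `C_p(z) = z - (1 + L_p(z)/2) p(z)/p'(z)` (as a map on `ℂ`). -/
def Cfun (p : Polynomial ℂ) (z : ℂ) : ℂ :=
  z - (1 + Lfun p z / 2) * (p.eval z / p.derivative.eval z)

/-- The Chebyshev method of `p` as a rational self-map of the Riemann sphere:
`C_p = (2 z p'³ - 2 p p'² - p² p'') / (2 p'³)`. -/
def ChebSphere (p : Polynomial ℂ) : RSphere → RSphere :=
  ratSphere (C 2 * X * (derivative p) ^ 3 - C 2 * p * (derivative p) ^ 2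
      - p ^ 2 * derivative (derivative p))
    (C 2 * (derivative p) ^ 3)


lemma coeff_comp_C_mul_X' (p : Polynomial ℂ) (a : ℂ) (k : ℕ) :
    (p.comp (C a * X)).coeff k = a ^ k * p.coeff k := by
  induction p using Polynomial.induction_on' with
  | add p q hp hq => simp [add_comp, coeff_add, hp, hq, mul_add]
  | monomial m c =>
      rw [monomial_comp, mul_pow, ← C_pow, ← mul_assoc, ← C_mul]
      simp only [coeff_C_mul, coeff_X_pow, coeff_monomial]
      by_cases h : k = m
      · simp [h, mul_comm]
      · simp [h, Ne.symm h]

/-- Let `Q₀(z) = z^{n₁} + b₂z^{n₂} + ⋯ + b_r z^{n_r} + b_{r+1}` with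
`n₁ > n₂ > ⋯ > n_r > 0`, `b_i ≠ 0` for `i = 2, …, r+1`, and `gcd(n₁, …, n_r) = 1`.
Let `β₂ ≥ 1` and `μ ∈ ℂ`.  If `Q₀(μ^{β₂} z^{β₂}) = Q₀(z^{β₂})` for all `z`, then
`μ^{β₂} = 1`. -/
theorem root_of_unity_of_coeff_comparison (r : ℕ) (hr : 1 ≤ r) (n : ℕ → ℕ) (b : ℕ → ℂ)
    (hdec : ∀ i j : ℕ, 1 ≤ i → i < j → j ≤ r → n j < n i)
    (hpos : 0 < n r)
    (hb : ∀ i : ℕ, 2 ≤ i → i ≤ r + 1 → b i ≠ 0)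
    (hgcd : (Finset.Icc 1 r).gcd n = 1)
    (Q₀ : Polynomial ℂ)
    (hQ₀ : Q₀ = X ^ (n 1) + ∑ i ∈ Finset.Icc 2 r, C (b i) * X ^ (n i) + C (b (r + 1)))
    (β₂ : ℕ) (hβ₂ : 1 ≤ β₂) (μ : ℂ)
    (heq : ∀ z : ℂ, Q₀.eval (μ ^ β₂ * z ^ β₂) = Q₀.eval (z ^ β₂)) :
    μ ^ β₂ = 1 := by
  set ν := μ ^ β₂ with hν
  -- the functional equation holds for all w, by surjectivity of z ↦ z^β₂
  have hall : ∀ w : ℂ, Q₀.eval (ν * w) = Q₀.eval w := by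
    intro w
    obtain ⟨z, hz⟩ := IsAlgClosed.exists_pow_nat_eq w (n := β₂) hβ₂
    rw [← hz]; exact heq z
  have hpoly : Q₀.comp (C ν * X) = Q₀ := by
    apply Polynomial.funext
    intro w
    simpa [eval_comp] using hall w
  -- injectivity and positivity of the exponents
  have hnpos : ∀ i, 1 ≤ i → i ≤ r → 0 < n i := by
    intro i h1 h2
    rcases eq_or_lt_of_le h2 with h | h
    · rwa [h]
    · exact lt_trans hpos (hdec i r h1 h le_rfl)
  have hninj : ∀ i j, 1 ≤ i → i ≤ r → 1 ≤ j → j ≤ r → i ≠ j → n i ≠ n j := by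
    intro i j h1 h2 h3 h4 hij
    rcases lt_or_gt_of_ne hij with h | h
    · exact (hdec i j h1 h h4).ne'
    · exact (hdec j i h3 h h2).ne
  -- coefficients of Q₀ at the exponents n i
  have hcoeff : ∀ i, 1 ≤ i → i ≤ r → Q₀.coeff (n i) = if i = 1 then 1 else b i := by
    intro i h1 h2
    subst hQ₀
    rw [coeff_add, coeff_add, Polynomial.finset_sum_coeff]
    have hC : (C (b (r + 1))).coeff (n i) = 0 := by
      rw [coeff_C, if_neg (hnpos i h1 h2).ne']
    rw [hC, add_zero, coeff_X_pow]
    by_cases hi : i = 1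
    · subst hi
      rw [if_pos rfl, if_pos rfl]
      have hs : ∀ j ∈ Finset.Icc 2 r, (C (b j) * X ^ (n j)).coeff (n 1) = 0 := by
        intro j hj
        obtain ⟨hj1, hj2⟩ := Finset.mem_Icc.mp hj
        rw [coeff_C_mul, coeff_X_pow,
          if_neg (hninj 1 j le_rfl h2 (le_trans one_le_two hj1) hj2
            (by omega))]
        ring
      rw [Finset.sum_eq_zero hs, add_zero]
    · have h2i : 2 ≤ i := by omega
      rw [if_neg (hninj i 1 h1 h2 le_rfl hr hi), if_neg hi, zero_add]
      rw [Finset.sum_eq_single i]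
      · rw [coeff_C_mul, coeff_X_pow, if_pos rfl, mul_one]
      · intro j hj hji
        obtain ⟨hj1, hj2⟩ := Finset.mem_Icc.mp hj
        rw [coeff_C_mul, coeff_X_pow,
          if_neg (hninj i j h1 h2 (le_trans one_le_two hj1) hj2 (Ne.symm hji)), mul_zero]
      · intro hi'
        exact absurd (Finset.mem_Icc.mpr ⟨h2i, h2⟩) hi'
  -- ν ^ (n i) = 1 for each i
  have hone : ∀ i ∈ Finset.Icc 1 r, ν ^ (n i) = 1 := by
    intro i hi
    obtain ⟨h1, h2⟩ := Finset.mem_Icc.mp hi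
    have hc : Q₀.coeff (n i) ≠ 0 := by
      rw [hcoeff i h1 h2]
      by_cases hi1 : i = 1
      · simp [hi1]
      · rw [if_neg hi1]; exact hb i (by omega) (by omega)
    have := congrArg (fun p => Polynomial.coeff p (n i)) hpoly
    simp only [coeff_comp_C_mul_X'] at this
    have h2' : ν ^ (n i) * Q₀.coeff (n i) = 1 * Q₀.coeff (n i) := by
      rw [one_mul]; exact this
    exact mul_right_cancel₀ hc h2'
  -- conclude via the order of ν
  have hdvd : orderOf ν ∣ (Finset.Icc 1 r).gcd n :=
    Finset.dvd_gcd fun i hi => orderOf_dvd_of_pow_eq_one (hone i hi)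
  rw [hgcd, Nat.dvd_one] at hdvd
  exact orderOf_eq_one_iff.mp hdvd

end
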